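/- Let g : [0,1] → [0,∞) be C¹ with a strict maximum at 0 and g'(0) < 0, let H : [0,1] → ℝ be continuous with H(0) ≠ 0, and let σ > -1. Then as m → ∞, ∫₀¹ g(s)ᵐ s^σ H(s) ds ∼ H(0) · (-g'(0)/g(0))^{-σ-1} · Γ(σ+1) · m^{-σ-1} · g(0)ᵐ. -/

import Mathlib

open Set Filter MeasureTheory

lemma watson_aux_pow_geom (σ : ℝ) {ρ : ℝ} (h0 : 0 ≤ ρ) (h1 : ρ < 1) :
    Tendsto (fun m : ℕ => (m : ℝ) ^ (σ + 1) * ρ ^ m) atTop (nhds 0) := by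
  obtain ⟨k, hk⟩ := exists_nat_ge (σ + 1)
  apply squeeze_zero' (Eventually.of_forall fun m => by positivity)
    ?_ (tendsto_pow_const_mul_const_pow_of_lt_one k h0 h1)
  filter_upwards [eventually_ge_atTop 1] with m hm
  have h1m : (1 : ℝ) ≤ (m : ℝ) := by exact_mod_cast hm
  have : (m : ℝ) ^ (σ + 1) ≤ (m : ℝ) ^ (k : ℕ) := by
    rw [← Real.rpow_natCast (m : ℝ) k]
    exact Real.rpow_le_rpow_of_exponent_le h1m hk
  exact mul_le_mul_of_nonneg_right this (by positivity)

theorem watson_lemma_variant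
    (g g' H : ℝ → ℝ) (σ : ℝ)
    (hg : ∀ x ∈ Icc (0:ℝ) 1, HasDerivAt g (g' x) x)
    (hg'cont : ContinuousOn g' (Icc 0 1))
    (hgnonneg : ∀ x ∈ Icc (0:ℝ) 1, 0 ≤ g x)
    (hgmax : ∀ x ∈ Ioc (0:ℝ) 1, g x < g 0)
    (hg'0 : g' 0 < 0)
    (hH : ContinuousOn H (Icc 0 1))
    (hH0 : H 0 ≠ 0)
    (hσ : -1 < σ) :
    Tendsto (fun m : ℕ =>
        (∫ s in (0:ℝ)..1, g s ^ m * s ^ σ * H s) /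
        (H 0 * (-g' 0 / g 0) ^ (-σ - 1) * Real.Gamma (σ + 1) *
          (m : ℝ) ^ (-σ - 1) * g 0 ^ m))
      atTop (nhds 1) := by
  have h01 : (0:ℝ) ∈ Icc (0:ℝ) 1 := ⟨le_refl 0, zero_le_one⟩
  have hgc : ContinuousOn g (Icc 0 1) :=
    fun x hx => (hg x hx).continuousAt.continuousWithinAt
  -- g 0 > 0
  have hg0 : 0 < g 0 := by
    rcases lt_or_eq_of_le (hgnonneg 0 h01) with h | h
    · exact h
    · exfalso
      have hslope : Tendsto (slope g 0) (nhdsWithin 0 {(0:ℝ)}ᶜ) (nhds (g' 0)) :=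
        hasDerivAt_iff_tendsto_slope.mp (hg 0 h01)
      have hslope' : Tendsto (slope g 0) (nhdsWithin 0 (Ioi 0)) (nhds (g' 0)) :=
        hslope.mono_left (nhdsWithin_mono 0 (fun x hx => ne_of_gt hx))
      have hev : ∀ᶠ x in nhdsWithin (0:ℝ) (Ioi 0), slope g 0 x < 0 :=
        hslope'.eventually_lt_const hg'0
      have hev2 : Ioc (0:ℝ) 1 ∈ nhdsWithin (0:ℝ) (Ioi 0) :=
        Ioc_mem_nhdsGT_of_mem ⟨le_refl 0, zero_lt_one⟩
      obtain ⟨x, hx1, hx2⟩ := (hev.and (eventually_of_mem hev2 fun x hx => hx)).exists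
      have : slope g 0 x = g x / x := by
        simp [slope_def_field, ← h]
      rw [this] at hx1
      have hgx : g x < 0 := by
        have := mul_neg_of_pos_of_neg hx2.1 hx1
        rwa [mul_div_cancel₀ _ (ne_of_gt hx2.1)] at this
      exact absurd (hgnonneg x ⟨hx2.1.le, hx2.2⟩) (not_le.mpr hgx)
  set a : ℝ := -g' 0 / g 0 with ha_def
  have ha : 0 < a := div_pos (neg_pos.mpr hg'0) hg0
  set c : ℝ := a / 2 with hc_def
  have hc : 0 < c := by positivity
  -- choose δ₀ with g > 0 on [0, δ₀]
  obtain ⟨δ₀, hδ₀0, hδ₀1, hgpos₀⟩ :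
      ∃ δ₀ : ℝ, 0 < δ₀ ∧ δ₀ ≤ 1 ∧ ∀ s ∈ Icc (0:ℝ) δ₀, 0 < g s := by
    have hev : ∀ᶠ s in nhdsWithin (0:ℝ) (Icc 0 1), 0 < g s :=
      (hgc 0 h01).eventually (eventually_gt_nhds hg0)
    obtain ⟨ε, hε, hball⟩ := Metric.mem_nhdsWithin_iff.mp hev
    refine ⟨min (ε/2) 1, by positivity, min_le_right _ _, fun s hs => ?_⟩
    have hs1 : s ∈ Icc (0:ℝ) 1 := ⟨hs.1, hs.2.trans (min_le_right _ _)⟩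
    have : s ∈ Metric.ball (0:ℝ) ε := by
      rw [Metric.mem_ball, Real.dist_eq, sub_zero, abs_of_nonneg hs.1]
      exact lt_of_le_of_lt (hs.2.trans (min_le_left _ _)) (by linarith)
    exact hball ⟨this, hs1⟩
  -- choose δ ≤ δ₀ with g'/g + c < 0 on [0, δ]
  obtain ⟨δ, hδ0, hδδ₀, hψneg⟩ :
      ∃ δ : ℝ, 0 < δ ∧ δ ≤ δ₀ ∧ ∀ s ∈ Icc (0:ℝ) δ, g' s / g s + c < 0 := by
    have hsub : Icc (0:ℝ) δ₀ ⊆ Icc 0 1 := Icc_subset_Icc (le_refl 0) hδ₀1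
    have hψcont : ContinuousOn (fun s => g' s / g s + c) (Icc 0 δ₀) :=
      ((hg'cont.mono hsub).div (hgc.mono hsub)
        (fun x hx => (hgpos₀ x hx).ne')).add continuousOn_const
    have h0mem : (0:ℝ) ∈ Icc (0:ℝ) δ₀ := ⟨le_refl 0, hδ₀0.le⟩
    have hψ0 : g' 0 / g 0 + c < 0 := by
      have : g' 0 / g 0 = -a := by rw [ha_def]; ring
      rw [this, hc_def]; linarith
    have hev : ∀ᶠ s in nhdsWithin (0:ℝ) (Icc 0 δ₀), g' s / g s + c < 0 :=
      (hψcont 0 h0mem).eventually (eventually_lt_nhds hψ0)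
    obtain ⟨ε, hε, hball⟩ := Metric.mem_nhdsWithin_iff.mp hev
    refine ⟨min (ε/2) δ₀, by positivity, min_le_right _ _, fun s hs => ?_⟩
    have hs1 : s ∈ Icc (0:ℝ) δ₀ := ⟨hs.1, hs.2.trans (min_le_right _ _)⟩
    have : s ∈ Metric.ball (0:ℝ) ε := by
      rw [Metric.mem_ball, Real.dist_eq, sub_zero, abs_of_nonneg hs.1]
      exact lt_of_le_of_lt (hs.2.trans (min_le_left _ _)) (by linarith)
    exact hball ⟨this, hs1⟩
  have hδ1 : δ ≤ 1 := hδδ₀.trans hδ₀1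
  have hgpos : ∀ s ∈ Icc (0:ℝ) δ, 0 < g s :=
    fun s hs => hgpos₀ s ⟨hs.1, hs.2.trans hδδ₀⟩
  have hIccsub : Icc (0:ℝ) δ ⊆ Icc 0 1 := Icc_subset_Icc (le_refl 0) hδ1
  -- the exponential domination : g s / g 0 ≤ exp (-(c*s)) on [0, δ]
  have hfexp : ∀ s ∈ Icc (0:ℝ) δ, g s / g 0 ≤ Real.exp (-(c * s)) := by
    have hφanti : StrictAntiOn (fun s => Real.log (g s) + c * s) (Icc 0 δ) := by
      apply strictAntiOn_of_deriv_neg (convex_Icc 0 δ)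
      · exact ((hgc.mono hIccsub).log fun x hx => (hgpos x hx).ne').add
          (continuous_const.mul continuous_id).continuousOn
      · intro x hx
        rw [interior_Icc] at hx
        have hx' : x ∈ Icc (0:ℝ) δ := ⟨hx.1.le, hx.2.le⟩
        have hd : HasDerivAt (fun s => Real.log (g s) + c * s)
            ((g x)⁻¹ * g' x + c * 1) x :=
          ((Real.hasDerivAt_log (hgpos x hx').ne').comp x (hg x (hIccsub hx'))).add
            ((hasDerivAt_id x).const_mul c)
        rw [hd.deriv]
        have := hψneg x hx'
        rw [div_eq_inv_mul] at this
        linarith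
    intro s hs
    rcases eq_or_lt_of_le hs.1 with h | h
    · simp [← h, div_self hg0.ne']
    · have := hφanti ⟨le_refl 0, hδ0.le⟩ hs h
      simp only [mul_zero, add_zero] at this
      have hlog : Real.log (g s) ≤ Real.log (g 0) + (-(c * s)) := by linarith
      have : g s ≤ Real.exp (Real.log (g 0) + (-(c * s))) := by
        rw [← Real.exp_log (hgpos s hs)]
        exact Real.exp_le_exp.mpr hlog
      rw [Real.exp_add, Real.exp_log hg0] at this
      rw [div_le_iff₀ hg0]
      linarith [this]
  -- bound for H on [0,1]
  obtain ⟨K, hK⟩ := IsCompact.exists_bound_of_continuousOn isCompact_Icc hH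
  have hK0 : 0 ≤ K := le_trans (norm_nonneg _) (hK 0 h01)
  -- tail bound data
  obtain ⟨x₀, hx₀mem, hx₀max⟩ :=
    isCompact_Icc.exists_isMaxOn (nonempty_Icc.mpr hδ1)
      (hgc.mono (Icc_subset_Icc hδ0.le (le_refl 1)))
  set ρ : ℝ := g x₀ / g 0 with hρ_def
  have hρ0 : 0 ≤ ρ := div_nonneg (hgnonneg x₀ ⟨hδ0.le.trans hx₀mem.1, hx₀mem.2⟩) hg0.le
  have hρ1 : ρ < 1 :=
    (div_lt_one hg0).mpr (hgmax x₀ ⟨hδ0.trans_le hx₀mem.1, hx₀mem.2⟩)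
  -- integrability of the (normalized) integrand on [0,1]
  have hInt : ∀ m : ℕ, IntervalIntegrable
      (fun s => (g s / g 0) ^ m * s ^ σ * H s) MeasureTheory.volume 0 1 := by
    intro m
    have huIcc : uIcc (0:ℝ) 1 = Icc 0 1 := uIcc_of_le zero_le_one
    have h1 : IntervalIntegrable (fun x : ℝ => x ^ σ) MeasureTheory.volume 0 1 :=
      intervalIntegral.intervalIntegrable_rpow' hσ
    have h2 : IntervalIntegrable (fun x : ℝ => (g x / g 0) ^ m * x ^ σ)
        MeasureTheory.volume 0 1 := by
      apply h1.continuousOn_mul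
      rw [huIcc]
      exact ((hgc.div_const (g 0)).pow m)
    have h3 := h2.mul_continuousOn (g := H) (by rw [huIcc]; exact hH)
    exact h3
  -- helper: membership facts
  have hmpos : ∀ (m : ℕ) (t : ℝ), t ∈ Ioc (0:ℝ) ((m:ℝ)*δ) → (0:ℝ) < m := by
    intro m t ht
    rcases Nat.eq_zero_or_pos m with rfl | h
    · rw [Set.mem_Ioc] at ht
      push_cast at ht
      linarith [ht.1, ht.2]
    · exact_mod_cast h
  have hmaps : ∀ (m : ℕ) (t : ℝ), t ∈ Ioc (0:ℝ) ((m:ℝ)*δ) → t/m ∈ Icc (0:ℝ) δ := by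
    intro m t ht
    have hm := hmpos m t ht
    exact ⟨div_nonneg ht.1.le hm.le, (div_le_iff₀ hm).mpr (by linarith [ht.2])⟩
  -- the dominating function
  have hbound_int : Integrable (fun t => K * (t ^ σ * Real.exp (-(c * t))))
      (MeasureTheory.volume.restrict (Ioi 0)) := by
    have h0 : IntegrableOn (fun x : ℝ => x ^ σ * Real.exp (-c * x ^ (1:ℝ))) (Ioi 0) :=
      integrableOn_rpow_mul_exp_neg_mul_rpow hσ zero_lt_one hc
    have h1 : IntegrableOn (fun x : ℝ => x ^ σ * Real.exp (-(c * x))) (Ioi 0) :=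
      h0.congr_fun (fun x hx => by beta_reduce; rw [Real.rpow_one, neg_mul]) measurableSet_Ioi
    exact h1.const_mul K
  -- dominated convergence
  have hDCT : Tendsto (fun m : ℕ => ∫ t, (Ioc (0:ℝ) ((m:ℝ)*δ)).indicator
        (fun t => (g (t/m) / g 0) ^ m * t ^ σ * H (t/m)) t
        ∂(MeasureTheory.volume.restrict (Ioi 0))) atTop
      (nhds (∫ t in Ioi (0:ℝ), t ^ σ * Real.exp (-(a*t)) * H 0)) := by
    refine MeasureTheory.tendsto_integral_of_dominated_convergence
      (fun t => K * (t ^ σ * Real.exp (-(c * t)))) ?_ hbound_int ?_ ?_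
    · -- measurability
      intro m
      rw [aestronglyMeasurable_indicator_iff measurableSet_Ioc]
      have hre : (MeasureTheory.volume.restrict (Ioi (0:ℝ))).restrict (Ioc 0 ((m:ℝ)*δ))
          = MeasureTheory.volume.restrict (Ioc (0:ℝ) ((m:ℝ)*δ)) := by
        rw [Measure.restrict_restrict measurableSet_Ioc,
          inter_eq_left.mpr Ioc_subset_Ioi_self]
      rw [hre]
      have hdiv : Continuous fun t : ℝ => t / m := continuous_id.div_const _
      have hmapsTo : MapsTo (fun t : ℝ => t / m) (Ioc 0 ((m:ℝ)*δ)) (Icc 0 1) :=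
        fun t ht => hIccsub (hmaps m t ht)
      have h1 : ContinuousOn (fun t => (g (t/m) / g 0) ^ m) (Ioc 0 ((m:ℝ)*δ)) :=
        ((hgc.comp hdiv.continuousOn hmapsTo).div_const _).pow m
      have h2 : ContinuousOn (fun t : ℝ => t ^ σ) (Ioc 0 ((m:ℝ)*δ)) :=
        fun t ht => (Real.continuousAt_rpow_const t σ (Or.inl ht.1.ne')).continuousWithinAt
      have h3 : ContinuousOn (fun t => H (t/m)) (Ioc 0 ((m:ℝ)*δ)) :=
        hH.comp hdiv.continuousOn hmapsTo
      exact ((h1.mul h2).mul h3).aestronglyMeasurable measurableSet_Ioc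
    · -- bound
      intro m
      refine (MeasureTheory.ae_restrict_mem measurableSet_Ioi).mono fun t ht => ?_
      have ht0 : (0:ℝ) < t := ht
      by_cases htm : t ∈ Ioc (0:ℝ) ((m:ℝ)*δ)
      · rw [Set.indicator_of_mem htm]
        have hm := hmpos m t htm
        have hsmem := hmaps m t htm
        have hfs : 0 ≤ g (t/m) / g 0 := div_nonneg (hgnonneg _ (hIccsub hsmem)) hg0.le
        have h1 : (g (t/m) / g 0) ^ m ≤ Real.exp (-(c * t)) := by
          calc (g (t/m) / g 0) ^ m ≤ (Real.exp (-(c * (t/m)))) ^ m :=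
                pow_le_pow_left₀ hfs (hfexp _ hsmem) m
            _ = Real.exp ((m:ℝ) * -(c * (t/m))) := by rw [Real.exp_nat_mul]
            _ = Real.exp (-(c * t)) := by
                congr 1
                have hmne : (m:ℝ) ≠ 0 := hm.ne'
                field_simp
        have h2 : |H (t/m)| ≤ K := by
          have := hK _ (hIccsub hsmem)
          rwa [Real.norm_eq_abs] at this
        rw [Real.norm_eq_abs, abs_mul, abs_mul, abs_of_nonneg (pow_nonneg hfs m),
          abs_of_nonneg (Real.rpow_nonneg ht0.le σ)]
        calc (g (t/m) / g 0) ^ m * t ^ σ * |H (t/m)|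
            ≤ Real.exp (-(c*t)) * t ^ σ * K := by
              refine mul_le_mul (mul_le_mul_of_nonneg_right h1
                (Real.rpow_nonneg ht0.le σ)) h2 (abs_nonneg _) ?_
              exact mul_nonneg (Real.exp_nonneg _) (Real.rpow_nonneg ht0.le σ)
          _ = K * (t ^ σ * Real.exp (-(c * t))) := by ring
      · rw [Set.indicator_of_notMem htm, norm_zero]
        exact mul_nonneg hK0 (mul_nonneg (Real.rpow_nonneg ht0.le σ) (Real.exp_nonneg _))
    · -- pointwise limit
      refine (MeasureTheory.ae_restrict_mem measurableSet_Ioi).mono fun t ht => ?_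
      have ht0 : (0:ℝ) < t := ht
      have hev_in : ∀ᶠ m : ℕ in atTop, t ≤ (m:ℝ) * δ ∧ 1 ≤ m := by
        filter_upwards [eventually_ge_atTop (max 1 ⌈t/δ⌉₊)] with m hm
        have hm1 : 1 ≤ m := le_trans (le_max_left _ _) hm
        have hm2 : ((⌈t/δ⌉₊ : ℕ) : ℝ) ≤ (m:ℝ) := by
          exact_mod_cast le_trans (le_max_right _ _) hm
        refine ⟨?_, hm1⟩
        have h3 := (Nat.le_ceil (t/δ)).trans hm2
        rw [div_le_iff₀ hδ0] at h3
        linarith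
      -- limit of (g(t/m)/g0)^m
      have hlogd : HasDerivAt (fun s => Real.log (g s)) (-a) 0 := by
        have h := (Real.hasDerivAt_log hg0.ne').comp 0 (hg 0 h01)
        exact h.congr_deriv (by rw [ha_def]; ring)
      have hslope := hasDerivAt_iff_tendsto_slope.mp hlogd
      have hu : Tendsto (fun m : ℕ => t / m) atTop (nhdsWithin 0 {(0:ℝ)}ᶜ) := by
        rw [tendsto_nhdsWithin_iff]
        refine ⟨tendsto_const_div_atTop_nhds_zero_nat t, ?_⟩
        filter_upwards [eventually_ge_atTop 1] with m hm
        have hm1 : (0:ℝ) < m := by exact_mod_cast hm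
        exact mem_compl_singleton_iff.mpr (div_pos ht0 hm1).ne'
      have hA1 : Tendsto (fun m : ℕ => t * slope (fun s => Real.log (g s)) 0 (t/m))
          atTop (nhds (t * -a)) := (hslope.comp hu).const_mul t
      have hA0 : Tendsto (fun m : ℕ =>
          Real.exp (t * slope (fun s => Real.log (g s)) 0 (t/m)))
          atTop (nhds (Real.exp (-(a * t)))) := by
        have h2 := (Real.continuous_exp.tendsto _).comp hA1
        have : t * -a = -(a * t) := by ring
        rwa [this] at h2
      have hA : Tendsto (fun m : ℕ => (g (t/m) / g 0) ^ m) atTop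
          (nhds (Real.exp (-(a * t)))) := by
        apply hA0.congr'
        filter_upwards [hev_in] with m hm
        have hm1 : (0:ℝ) < m := by exact_mod_cast hm.2
        have hsmem : t/m ∈ Icc (0:ℝ) δ :=
          ⟨(div_pos ht0 hm1).le, (div_le_iff₀ hm1).mpr (by linarith [hm.1])⟩
        have hgpos' : 0 < g (t/m) := hgpos _ hsmem
        have htm : t / m ≠ 0 := (div_pos ht0 hm1).ne'
        have hslope_eq : slope (fun s => Real.log (g s)) 0 (t/m)
            = (Real.log (g (t/m)) - Real.log (g 0)) / (t/m) := by
          rw [slope_def_field, sub_zero]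
        have heq2 : t * ((Real.log (g (t/m)) - Real.log (g 0)) / (t/m))
            = (m:ℝ) * (Real.log (g (t/m)) - Real.log (g 0)) := by
          field_simp [ht0.ne']
        rw [hslope_eq, heq2, ← Real.log_div hgpos'.ne' hg0.ne', Real.exp_nat_mul,
          Real.exp_log (div_pos hgpos' hg0)]
      have hu2 : Tendsto (fun m : ℕ => t / m) atTop (nhdsWithin 0 (Icc 0 1)) := by
        rw [tendsto_nhdsWithin_iff]
        refine ⟨tendsto_const_div_atTop_nhds_zero_nat t, ?_⟩
        filter_upwards [hev_in] with m hm
        have hm1 : (0:ℝ) < m := by exact_mod_cast hm.2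
        exact hIccsub ⟨(div_pos ht0 hm1).le, (div_le_iff₀ hm1).mpr (by linarith [hm.1])⟩
      have hC : Tendsto (fun m : ℕ => H (t/m)) atTop (nhds (H 0)) :=
        (hH 0 h01).tendsto.comp hu2
      have hall : Tendsto (fun m : ℕ => (g (t/m) / g 0) ^ m * t ^ σ * H (t/m)) atTop
          (nhds (Real.exp (-(a*t)) * t ^ σ * H 0)) := (hA.mul tendsto_const_nhds).mul hC
      have hcomm : Real.exp (-(a*t)) * t ^ σ * H 0 = t ^ σ * Real.exp (-(a*t)) * H 0 := by
        ring
      rw [hcomm] at hall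
      apply hall.congr'
      filter_upwards [hev_in] with m hm
      exact (Set.indicator_of_mem (show t ∈ Ioc (0:ℝ) ((m:ℝ)*δ) from ⟨ht0, hm.1⟩)
        (fun u => (g (u/(m:ℝ)) / g 0) ^ m * u ^ σ * H (u/(m:ℝ)))).symm
  -- value of the limit integral
  have hlimval : (∫ t in Ioi (0:ℝ), t ^ σ * Real.exp (-(a*t)) * H 0)
      = H 0 * a ^ (-σ - 1) * Real.Gamma (σ + 1) := by
    rw [MeasureTheory.integral_mul_const]
    have h1 : (∫ t in Ioi (0:ℝ), t ^ σ * Real.exp (-(a*t)))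
        = (1/a) ^ (σ+1) * Real.Gamma (σ+1) := by
      have h := Real.integral_rpow_mul_exp_neg_mul_Ioi (show 0 < σ + 1 by linarith) ha
      simpa [add_sub_cancel_right] using h
    rw [h1]
    have h2 : (1/a : ℝ) ^ (σ+1) = a ^ (-σ - 1) := by
      rw [one_div, Real.inv_rpow ha.le, ← Real.rpow_neg ha.le]
      congr 1
      ring
    rw [h2]
    ring
  -- identification of the truncated integral with the rescaled one
  have hmain_eq : ∀ m : ℕ, 1 ≤ m →
      (∫ t, (Ioc (0:ℝ) ((m:ℝ)*δ)).indicator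
        (fun t => (g (t/m) / g 0) ^ m * t ^ σ * H (t/m)) t
        ∂(MeasureTheory.volume.restrict (Ioi 0)))
      = (m:ℝ) ^ (σ + 1) * ∫ s in (0:ℝ)..δ, (g s / g 0) ^ m * s ^ σ * H s := by
    intro m hm
    have hm0 : (0:ℝ) < m := by exact_mod_cast hm
    have hmδ : (0:ℝ) ≤ (m:ℝ)*δ := by positivity
    rw [MeasureTheory.setIntegral_indicator measurableSet_Ioc,
      inter_eq_right.mpr Ioc_subset_Ioi_self,
      ← intervalIntegral.integral_of_le hmδ]
    have hcongr : (∫ t in (0:ℝ)..((m:ℝ)*δ), (g (t/m) / g 0) ^ m * t ^ σ * H (t/m))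
        = ∫ t in (0:ℝ)..((m:ℝ)*δ),
            (fun s => (m:ℝ)^σ * ((g s / g 0) ^ m * s ^ σ * H s)) (t/m) := by
      apply intervalIntegral.integral_congr
      intro t ht
      rw [uIcc_of_le hmδ] at ht
      simp only
      have htσ : t ^ σ = (m:ℝ)^σ * (t/m) ^ σ := by
        rw [← Real.mul_rpow hm0.le (div_nonneg ht.1 hm0.le), mul_div_cancel₀ _ hm0.ne']
      rw [htσ]
      ring
    rw [hcongr, intervalIntegral.integral_comp_div
      (fun s => (m:ℝ)^σ * ((g s / g 0) ^ m * s ^ σ * H s)) hm0.ne', zero_div,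
      mul_div_cancel_left₀ _ hm0.ne', smul_eq_mul, intervalIntegral.integral_const_mul,
      Real.rpow_add_one hm0.ne']
    ring
  -- the tail is negligible
  have htail : Tendsto (fun m : ℕ => (m:ℝ) ^ (σ+1) *
      ∫ s in δ..(1:ℝ), (g s / g 0) ^ m * s ^ σ * H s) atTop (nhds 0) := by
    obtain ⟨K₂, hK₂⟩ := IsCompact.exists_bound_of_continuousOn (isCompact_Icc (a := δ) (b := 1))
      (ContinuousOn.mul (fun t ht => (Real.continuousAt_rpow_const t σ
        (Or.inl (hδ0.trans_le ht.1).ne')).continuousWithinAt)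
        (hH.mono (Icc_subset_Icc hδ0.le le_rfl)))
    have hK₂0 : 0 ≤ K₂ := le_trans (norm_nonneg _) (hK₂ δ ⟨le_rfl, hδ1⟩)
    refine squeeze_zero_norm (a := fun m : ℕ => (m:ℝ)^(σ+1) * ρ^m * (K₂ * |1 - δ|)) ?_ ?_
    · intro m
      have hbnd : ∀ x ∈ Set.uIoc δ (1:ℝ), ‖(g x / g 0) ^ m * x ^ σ * H x‖ ≤ ρ^m * K₂ := by
        intro x hx
        rw [uIoc_of_le hδ1] at hx
        have hxmem : x ∈ Icc δ 1 := ⟨hx.1.le, hx.2⟩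
        have hx01 : x ∈ Icc (0:ℝ) 1 := ⟨hδ0.le.trans hx.1.le, hx.2⟩
        have hfx : 0 ≤ g x / g 0 := div_nonneg (hgnonneg x hx01) hg0.le
        have hfxρ : g x / g 0 ≤ ρ := by
          rw [hρ_def]
          exact div_le_div_of_nonneg_right (hx₀max hxmem) hg0.le
        have h1 : (g x / g 0) ^ m ≤ ρ ^ m := pow_le_pow_left₀ hfx hfxρ m
        have h2 : ‖x ^ σ * H x‖ ≤ K₂ := hK₂ x hxmem
        calc ‖(g x / g 0) ^ m * x ^ σ * H x‖
            = (g x / g 0) ^ m * ‖x ^ σ * H x‖ := by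
              rw [mul_assoc, norm_mul, Real.norm_eq_abs ((g x / g 0)^m),
                abs_of_nonneg (pow_nonneg hfx m)]
          _ ≤ ρ ^ m * K₂ :=
              mul_le_mul h1 h2 (norm_nonneg _) (pow_nonneg hρ0 m)
      have hineq := intervalIntegral.norm_integral_le_of_norm_le_const hbnd
      rw [norm_mul, Real.norm_eq_abs ((m:ℝ)^(σ+1)),
        abs_of_nonneg (Real.rpow_nonneg (Nat.cast_nonneg m) _)]
      calc (m:ℝ)^(σ+1) * ‖∫ s in δ..(1:ℝ), (g s / g 0) ^ m * s ^ σ * H s‖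
          ≤ (m:ℝ)^(σ+1) * (ρ^m * K₂ * |1 - δ|) :=
            mul_le_mul_of_nonneg_left hineq (Real.rpow_nonneg (Nat.cast_nonneg m) _)
        _ = (m:ℝ)^(σ+1) * ρ^m * (K₂ * |1 - δ|) := by ring
    · simpa using (watson_aux_pow_geom σ hρ0 hρ1).mul_const (K₂ * |1 - δ|)
  -- splitting the integral
  have hsplit : ∀ m : ℕ, (∫ s in (0:ℝ)..δ, (g s / g 0) ^ m * s ^ σ * H s)
      + (∫ s in δ..(1:ℝ), (g s / g 0) ^ m * s ^ σ * H s)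
      = ∫ s in (0:ℝ)..1, (g s / g 0) ^ m * s ^ σ * H s := by
    intro m
    apply intervalIntegral.integral_add_adjacent_intervals
    · exact (hInt m).mono_set (by
        rw [uIcc_of_le hδ0.le, uIcc_of_le zero_le_one]
        exact Icc_subset_Icc le_rfl hδ1)
    · exact (hInt m).mono_set (by
        rw [uIcc_of_le hδ1, uIcc_of_le zero_le_one]
        exact Icc_subset_Icc hδ0.le le_rfl)
  -- the normalized limit
  have hN : Tendsto (fun m : ℕ => (m:ℝ) ^ (σ+1) *
      ∫ s in (0:ℝ)..1, (g s / g 0) ^ m * s ^ σ * H s) atTop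
      (nhds (H 0 * a ^ (-σ - 1) * Real.Gamma (σ + 1))) := by
    have hmain : Tendsto (fun m : ℕ => (m:ℝ)^(σ+1) *
        ∫ s in (0:ℝ)..δ, (g s / g 0) ^ m * s ^ σ * H s)
        atTop (nhds (H 0 * a ^ (-σ-1) * Real.Gamma (σ+1))) := by
      rw [← hlimval]
      apply hDCT.congr'
      filter_upwards [eventually_ge_atTop 1] with m hm
      exact hmain_eq m hm
    have hsum := hmain.add htail
    rw [add_zero] at hsum
    exact hsum.congr fun m => by rw [← mul_add, hsplit m]
  -- conclusion
  have hL : H 0 * a ^ (-σ - 1) * Real.Gamma (σ + 1) ≠ 0 :=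
    mul_ne_zero (mul_ne_zero hH0 (Real.rpow_pos_of_pos ha _).ne')
      (Real.Gamma_pos_of_pos (by linarith : (0:ℝ) < σ + 1)).ne'
  have hfin := hN.div_const (H 0 * a ^ (-σ - 1) * Real.Gamma (σ + 1))
  rw [div_self hL] at hfin
  apply hfin.congr'
  filter_upwards [eventually_ge_atTop 1] with m hm
  have hm0 : (0:ℝ) < m := by exact_mod_cast hm
  have hgm : (g 0) ^ m ≠ 0 := pow_ne_zero _ hg0.ne'
  have hnum : (∫ s in (0:ℝ)..1, g s ^ m * s ^ σ * H s)
      = (g 0)^m * ∫ s in (0:ℝ)..1, (g s / g 0) ^ m * s ^ σ * H s := by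
    rw [← intervalIntegral.integral_const_mul]
    apply intervalIntegral.integral_congr
    intro s hs
    simp only
    rw [div_pow]
    field_simp
  have hden : ((m:ℝ)) ^ (-σ - 1) = ((m:ℝ) ^ (σ+1))⁻¹ := by
    rw [show (-σ - 1 : ℝ) = -(σ+1) by ring, Real.rpow_neg hm0.le]
  have hmσ : ((m:ℝ) ^ (σ+1)) ≠ 0 := (Real.rpow_pos_of_pos hm0 _).ne'
  rw [hnum, hden]
  field_simp
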